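/- Let A be a unital C*-algebra containing elements u, v with u*u = v*v = uu* + vv* = 1 and u*v = v*u = 0, and let n ∈ ℕ, n ≥ 1. Then the map φ : Mₙ(A) → M₂ₙ(A) sending a matrix X to the 2×2 block matrix [[u*Xu, u*Xv],[v*Xu, v*Xv]], where for a,b ∈ A and X = (x_{ij}) the symbol aXb denotes the matrix (a·x_{ij}·b), is a bijective isometric *-isomorphism of C*-algebras, with inverse ψ([[A',B],[C,D]]) = uA'u* + uBv* + vCu* + vDv*. In particular, the C*-algebras A, M₂(A), M₄(A), …, M_{2^k}(A), … are pairwise isometrically *-isomorphic. -/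

import Mathlib

set_option maxHeartbeats 1000000

/-- The norm of a vector in the standard Hilbert C*-module `Aⁿ`. -/
noncomputable def cstarVecNorm {A : Type*} [CStarAlgebra A] {ι : Type*} [Fintype ι]
    (w : ι → A) : ℝ :=
  Real.sqrt ‖∑ i, star (w i) * w i‖

/-- The canonical C*-norm on matrices over a unital C*-algebra `A`: the operator norm of
the action of a matrix on the standard Hilbert C*-module. -/
noncomputable def cstarMatrixNorm {A : Type*} [CStarAlgebra A] {ι : Type*} [Fintype ι]
    (M : Matrix ι ι A) : ℝ :=
  ⨆ w : {w : ι → A // cstarVecNorm w ≤ 1}, cstarVecNorm (M.mulVec w)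

section Aux

variable {A : Type*} [CStarAlgebra A]

lemma cstarVecNorm_comp_equiv {ι ι' : Type*} [Fintype ι] [Fintype ι']
    (σ : ι ≃ ι') (w : ι' → A) : cstarVecNorm (w ∘ σ) = cstarVecNorm w := by
  unfold cstarVecNorm
  congr 1
  congr 1
  exact Fintype.sum_equiv σ _ _ fun i => rfl

/-- Transport of the matrix norm along a vector-level norm-preserving equivalence. -/
lemma cstarMatrixNorm_eq_of_equiv {ι ι' : Type*} [Fintype ι] [Fintype ι']
    (M : Matrix ι ι A) (M' : Matrix ι' ι' A) (T : (ι' → A) ≃ (ι → A))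
    (hT : ∀ w, cstarVecNorm (T w) = cstarVecNorm w)
    (hM : ∀ w, cstarVecNorm (M'.mulVec w) = cstarVecNorm (M.mulVec (T w))) :
    cstarMatrixNorm M' = cstarMatrixNorm M := by
  unfold cstarMatrixNorm
  let E : {w : ι' → A // cstarVecNorm w ≤ 1} ≃ {w : ι → A // cstarVecNorm w ≤ 1} :=
    { toFun := fun w => ⟨T w, (hT w.1).trans_le w.2⟩
      invFun := fun w => ⟨T.symm w, by
        have h := hT (T.symm w.1)
        rw [T.apply_symm_apply] at h
        exact h.symm.trans_le w.2⟩
      left_inv := fun w => by simp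
      right_inv := fun w => by simp }
  exact E.iSup_congr fun w => (hM w.1).symm

lemma cstarMatrixNorm_reindex {ι ι' : Type*} [Fintype ι] [Fintype ι']
    [DecidableEq ι] [DecidableEq ι']
    (σ : ι ≃ ι') (M : Matrix ι ι A) :
    cstarMatrixNorm (Matrix.reindex σ σ M) = cstarMatrixNorm M := by
  refine cstarMatrixNorm_eq_of_equiv M _
    ⟨fun w => w ∘ σ, fun z => z ∘ σ.symm,
      fun w => by funext i'; simp, fun z => by funext i; simp⟩
    (fun w => cstarVecNorm_comp_equiv σ w) (fun w => ?_)
  have h : (Matrix.reindex σ σ M).mulVec w = (M.mulVec (w ∘ σ)) ∘ σ.symm := by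
    funext i'
    simp only [Matrix.mulVec, dotProduct, Matrix.reindex_apply,
      Matrix.submatrix_apply, Function.comp]
    exact (Fintype.sum_equiv σ _ _ fun j => by simp).symm
  rw [h]
  exact cstarVecNorm_comp_equiv σ.symm _

/-- Reindexing as a star-algebra equivalence. -/
noncomputable def reindexStarAlgEquiv {ι ι' : Type*} [Fintype ι] [Fintype ι']
    [DecidableEq ι] [DecidableEq ι'] (σ : ι ≃ ι') :
    Matrix ι ι A ≃⋆ₐ[ℂ] Matrix ι' ι' A :=
  { Matrix.reindexAlgEquiv ℂ A σ with
    map_star' := fun M => by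
      ext i j
      simp [Matrix.reindexAlgEquiv, Matrix.reindex_apply, Matrix.submatrix_apply,
        Matrix.star_apply]
    map_smul' := fun r M => by
      ext i j
      simp [Matrix.reindexAlgEquiv, Matrix.reindex_apply, Matrix.submatrix_apply] }

lemma reindexStarAlgEquiv_apply {ι ι' : Type*} [Fintype ι] [Fintype ι']
    [DecidableEq ι] [DecidableEq ι'] (σ : ι ≃ ι') (M : Matrix ι ι A) :
    reindexStarAlgEquiv σ M = Matrix.reindex σ σ M := rfl

/-- `A` is star-algebra isomorphic to `1 × 1` matrices over `A`. -/
noncomputable def oneByOneEquiv : A ≃⋆ₐ[ℂ] Matrix (Fin 1) (Fin 1) A :=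
  { toFun := fun x => Matrix.of fun _ _ => x
    invFun := fun M => M 0 0
    left_inv := fun x => rfl
    right_inv := fun M => by ext i j; fin_cases i; fin_cases j; rfl
    map_mul' := fun x y => by
      ext i j
      simp [Matrix.mul_apply]
    map_add' := fun x y => by ext i j; simp
    map_smul' := fun r x => by ext i j; simp
    map_star' := fun x => by ext i j; simp [Matrix.star_apply] }

lemma cstarVecNorm_single (x : A) : cstarVecNorm (fun _ : Fin 1 => x) = ‖x‖ := by
  unfold cstarVecNorm
  rw [Fin.sum_univ_one, CStarRing.norm_star_mul_self]
  exact Real.sqrt_mul_self (norm_nonneg x)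

lemma cstarMatrixNorm_oneByOne (x : A) :
    cstarMatrixNorm (oneByOneEquiv (A := A) x) = ‖x‖ := by
  unfold cstarMatrixNorm
  have key : ∀ w : Fin 1 → A, (oneByOneEquiv (A := A) x).mulVec w = fun _ => x * w 0 := by
    intro w
    funext i
    simp [Matrix.mulVec, dotProduct, oneByOneEquiv]
    rfl
  have hvec : ∀ w : Fin 1 → A, cstarVecNorm w = ‖w 0‖ := by
    intro w
    have : w = fun _ : Fin 1 => w 0 := by funext i; fin_cases i; rfl
    rw [this]
    exact cstarVecNorm_single (w 0)
  have hub : ∀ w : {w : Fin 1 → A // cstarVecNorm w ≤ 1},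
      cstarVecNorm ((oneByOneEquiv (A := A) x).mulVec w.1) ≤ ‖x‖ := by
    intro w
    rw [key, hvec]
    calc ‖x * w.1 0‖ ≤ ‖x‖ * ‖w.1 0‖ := norm_mul_le _ _
      _ ≤ ‖x‖ * 1 := by
          refine mul_le_mul_of_nonneg_left ?_ (norm_nonneg x)
          have := w.2
          rwa [hvec] at this
      _ = ‖x‖ := mul_one _
  haveI : Nonempty {w : Fin 1 → A // cstarVecNorm w ≤ 1} :=
    ⟨⟨fun _ => 0, by rw [hvec]; simp⟩⟩
  refine le_antisymm (ciSup_le hub) ?_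
  · have hone : ‖(1 : A)‖ ≤ 1 := by
      have h := CStarRing.norm_star_mul_self (x := (1 : A))
      simp only [star_one, one_mul] at h
      nlinarith [norm_nonneg (1 : A)]
    have h1 : cstarVecNorm (fun _ : Fin 1 => (1 : A)) ≤ 1 := by
      rw [cstarVecNorm_single]; exact hone
    have := le_ciSup (f := fun w : {w : Fin 1 → A // cstarVecNorm w ≤ 1} =>
        cstarVecNorm ((oneByOneEquiv (A := A) x).mulVec w.1))
      ⟨‖x‖, Set.forall_mem_range.mpr hub⟩ ⟨fun _ => 1, h1⟩
    simpa [key, hvec] using this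

section UV

variable (u v : A)
    (huu : star u * u = 1) (hvv : star v * v = 1) (hsum : u * star u + v * star v = 1)
    (huv : star u * v = 0) (hvu : star v * u = 0)

/-- Auxiliary coefficient vector. -/
private def cc (n : ℕ) : Fin n ⊕ Fin n → A := Sum.elim (fun _ => u) (fun _ => v)

private def pp {n : ℕ} : Fin n ⊕ Fin n → Fin n := Sum.elim id id

/-- The doubling star-algebra equivalence `Mₙ(A) ≃⋆ₐ M₂ₙ(A)`. -/
noncomputable def doubleEquiv (n : ℕ) :
    Matrix (Fin n) (Fin n) A ≃⋆ₐ[ℂ] Matrix (Fin n ⊕ Fin n) (Fin n ⊕ Fin n) A where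
  toFun X := Matrix.of fun i j => star (cc u v n i) * X (pp i) (pp j) * cc u v n j
  invFun Y := Matrix.of fun i j =>
    u * Y (Sum.inl i) (Sum.inl j) * star u + u * Y (Sum.inl i) (Sum.inr j) * star v
      + v * Y (Sum.inr i) (Sum.inl j) * star u + v * Y (Sum.inr i) (Sum.inr j) * star v
  left_inv X := by
    ext i j
    simp only [Matrix.of_apply, cc, pp, Sum.elim_inl, Sum.elim_inr, id]
    have h : (u * star u + v * star v) * X i j * (u * star u + v * star v) = X i j := by
      rw [hsum, one_mul, mul_one]
    conv_rhs => rw [← h]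
    noncomm_ring
  right_inv Y := by
    have huu' : ∀ x : A, star u * (u * x) = x := fun x => by
      rw [← mul_assoc, huu, one_mul]
    have hvv' : ∀ x : A, star v * (v * x) = x := fun x => by
      rw [← mul_assoc, hvv, one_mul]
    have huv' : ∀ x : A, star u * (v * x) = 0 := fun x => by
      rw [← mul_assoc, huv, zero_mul]
    have hvu' : ∀ x : A, star v * (u * x) = 0 := fun x => by
      rw [← mul_assoc, hvu, zero_mul]
    ext i j
    rcases i with i | i <;> rcases j with j | j <;>
      simp [cc, pp, mul_add, add_mul, mul_assoc, huu, hvv, huv, hvu, huu', hvv', huv', hvu']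
  map_mul' X Y := by
    have key2 : ∀ s x y t : A,
        s * x * u * (star u * y * t) + s * x * v * (star v * y * t) = s * (x * y) * t := by
      intro s x y t
      have h : s * x * u * (star u * y * t) + s * x * v * (star v * y * t)
          = s * x * ((u * star u + v * star v) * (y * t)) := by noncomm_ring
      rw [h, hsum, one_mul]; noncomm_ring
    ext i j
    simp only [Matrix.mul_apply, Matrix.of_apply, Finset.mul_sum, Finset.sum_mul]
    rw [Fintype.sum_sum_type, ← Finset.sum_add_distrib]
    refine Finset.sum_congr rfl fun k _ => ?_
    simp only [cc, pp, Sum.elim_inl, Sum.elim_inr, id]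
    exact (key2 _ _ _ _).symm
  map_add' X Y := by
    ext i j
    simp [Matrix.add_apply, mul_add, add_mul]
  map_smul' r X := by
    ext i j
    simp [Matrix.smul_apply, mul_smul_comm, smul_mul_assoc]
  map_star' X := by
    ext i j
    simp [Matrix.star_apply, star_mul, star_star, mul_assoc]

lemma doubleEquiv_norm (n : ℕ) (X : Matrix (Fin n) (Fin n) A) :
    cstarMatrixNorm (doubleEquiv u v huu hvv hsum huv hvu n X) = cstarMatrixNorm X := by
  have huu' : ∀ x : A, star u * (u * x) = x := fun x => by rw [← mul_assoc, huu, one_mul]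
  have hvv' : ∀ x : A, star v * (v * x) = x := fun x => by rw [← mul_assoc, hvv, one_mul]
  have huv' : ∀ x : A, star u * (v * x) = 0 := fun x => by rw [← mul_assoc, huv, zero_mul]
  have hvu' : ∀ x : A, star v * (u * x) = 0 := fun x => by rw [← mul_assoc, hvu, zero_mul]
  have hsum' : ∀ x : A, u * (star u * x) + v * (star v * x) = x := fun x => by
    rw [← mul_assoc, ← mul_assoc, ← add_mul, hsum, one_mul]
  let T : ((Fin n ⊕ Fin n) → A) ≃ (Fin n → A) :=
    { toFun := fun w j => u * w (Sum.inl j) + v * w (Sum.inr j)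
      invFun := fun z => Sum.elim (fun j => star u * z j) (fun j => star v * z j)
      left_inv := fun w => by
        funext i
        rcases i with i | i <;>
          simp [mul_add, huu', hvv', huv', hvu']
      right_inv := fun z => by
        funext j
        exact hsum' (z j) }
  refine cstarMatrixNorm_eq_of_equiv X _ T (fun w => ?_) (fun w => ?_)
  · -- vector norm preservation
    unfold cstarVecNorm
    congr 1
    congr 1
    rw [Fintype.sum_sum_type, ← Finset.sum_add_distrib]
    refine Finset.sum_congr rfl fun j _ => ?_
    show star (u * w (Sum.inl j) + v * w (Sum.inr j)) *
        (u * w (Sum.inl j) + v * w (Sum.inr j)) =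
      star (w (Sum.inl j)) * w (Sum.inl j) + star (w (Sum.inr j)) * w (Sum.inr j)
    set a := w (Sum.inl j); set b := w (Sum.inr j)
    calc star (u * a + v * b) * (u * a + v * b)
        = star a * (star u * u) * a + star a * (star u * v) * b
            + star b * (star v * u) * a + star b * (star v * v) * b := by
          simp only [star_add, star_mul]; noncomm_ring
      _ = star a * a + star b * b := by rw [huu, hvv, huv, hvu]; noncomm_ring
  · -- mulVec identity
    have hmv : (doubleEquiv u v huu hvv hsum huv hvu n X).mulVec w
        = fun i => star (cc u v n i) * (X.mulVec (T w)) (pp i) := by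
      funext i
      show ∑ k, (star (cc u v n i) * X (pp i) (pp k) * cc u v n k) * w k
        = star (cc u v n i) * ∑ j, X (pp i) j * (u * w (Sum.inl j) + v * w (Sum.inr j))
      rw [Finset.mul_sum, Fintype.sum_sum_type, ← Finset.sum_add_distrib]
      refine Finset.sum_congr rfl fun j _ => ?_
      simp only [cc, pp, Sum.elim_inl, Sum.elim_inr, id]
      noncomm_ring
    rw [hmv]
    set z := X.mulVec (T w) with hz
    unfold cstarVecNorm
    congr 1
    congr 1
    rw [Fintype.sum_sum_type, ← Finset.sum_add_distrib]
    refine Finset.sum_congr rfl fun j _ => ?_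
    simp only [cc, pp, Sum.elim_inl, Sum.elim_inr, id]
    calc star (star u * z j) * (star u * z j) + star (star v * z j) * (star v * z j)
        = star (z j) * ((u * star u + v * star v) * z j) := by
          simp only [star_mul, star_star]; noncomm_ring
      _ = star (z j) * z j := by rw [hsum, one_mul]

end UV

end Aux

theorem matrix_algebra_iso_double {A : Type*} [CStarAlgebra A] (u v : A)
    (huu : star u * u = 1) (hvv : star v * v = 1) (hsum : u * star u + v * star v = 1)
    (huv : star u * v = 0) (hvu : star v * u = 0) {n : ℕ} (hn : 1 ≤ n) :
    (∃ e : Matrix (Fin n) (Fin n) A ≃⋆ₐ[ℂ]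
        Matrix (Fin n ⊕ Fin n) (Fin n ⊕ Fin n) A,
      (∀ (X : Matrix (Fin n) (Fin n) A) (i j : Fin n),
        e X (Sum.inl i) (Sum.inl j) = star u * X i j * u ∧
        e X (Sum.inl i) (Sum.inr j) = star u * X i j * v ∧
        e X (Sum.inr i) (Sum.inl j) = star v * X i j * u ∧
        e X (Sum.inr i) (Sum.inr j) = star v * X i j * v) ∧
      (∀ X : Matrix (Fin n) (Fin n) A, cstarMatrixNorm (e X) = cstarMatrixNorm X) ∧
      (∀ (Y : Matrix (Fin n ⊕ Fin n) (Fin n ⊕ Fin n) A) (i j : Fin n),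
        e.symm Y i j =
          u * Y (Sum.inl i) (Sum.inl j) * star u + u * Y (Sum.inl i) (Sum.inr j) * star v
            + v * Y (Sum.inr i) (Sum.inl j) * star u
            + v * Y (Sum.inr i) (Sum.inr j) * star v)) ∧
    (∀ k : ℕ, ∃ f : A ≃⋆ₐ[ℂ] Matrix (Fin (2 ^ k)) (Fin (2 ^ k)) A,
      ∀ x : A, cstarMatrixNorm (f x) = ‖x‖) := by
  constructor
  · refine ⟨doubleEquiv u v huu hvv hsum huv hvu n, fun X i j => ⟨rfl, rfl, rfl, rfl⟩,
      doubleEquiv_norm u v huu hvv hsum huv hvu n, fun Y i j => rfl⟩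
  · intro k
    induction k with
    | zero =>
        refine ⟨oneByOneEquiv.trans (reindexStarAlgEquiv (finCongr (by norm_num))), fun x => ?_⟩
        rw [StarAlgEquiv.trans_apply, reindexStarAlgEquiv_apply, cstarMatrixNorm_reindex,
          cstarMatrixNorm_oneByOne]
    | succ k ih =>
        obtain ⟨f, hf⟩ := ih
        refine ⟨f.trans ((doubleEquiv u v huu hvv hsum huv hvu (2 ^ k)).trans
          (reindexStarAlgEquiv (finSumFinEquiv.trans (finCongr (by ring))))), fun x => ?_⟩
        rw [StarAlgEquiv.trans_apply, StarAlgEquiv.trans_apply, reindexStarAlgEquiv_apply,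
          cstarMatrixNorm_reindex, doubleEquiv_norm, hf]
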